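/- Let p be a prime and let k be an integer with 1 ≤ k ≤ p − 1. Then for every α ∈ F_p, the number N_k(α) of k-element subsets of F_p whose elements sum to α equals C(p, k)/p; equivalently, p · N_k(α) = C(p, k). -/

import Mathlib

/-- `N_k(α)`: the number of `k`-element subsets of `F_p` whose elements
sum to `α`. -/
noncomputable def Nsub (p k : ℕ) (α : ZMod p) : ℕ :=
  {A : Finset (ZMod p) | A.card = k ∧ (∑ a ∈ A, a) = α}.ncard

lemma Nsub_eq_filter (p k : ℕ) [NeZero p] (α : ZMod p) :
    Nsub p k α =
      (Finset.univ.filter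
        (fun A : Finset (ZMod p) => A.card = k ∧ (∑ a ∈ A, a) = α)).card := by
  classical
  simp [Nsub, Set.ncard_eq_toFinset_card', Set.toFinset_setOf]

lemma Nsub_shift (p k : ℕ) [NeZero p] (α c : ZMod p) :
    Nsub p k α = Nsub p k (α + k * c) := by
  classical
  rw [Nsub_eq_filter, Nsub_eq_filter]
  refine Finset.card_bij' (fun A _ => A.image (· + c)) (fun B _ => B.image (· + (-c)))
    ?_ ?_ ?_ ?_
  · intro A hA
    simp only [Finset.mem_filter, Finset.mem_univ, true_and] at hA ⊢
    obtain ⟨hcard, hsum⟩ := hA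
    have hinj : Function.Injective (· + c) := add_left_injective c
    constructor
    · rw [Finset.card_image_of_injective _ hinj, hcard]
    · rw [Finset.sum_image (fun x _ y _ h => hinj h), Finset.sum_add_distrib, hsum,
        Finset.sum_const, hcard, nsmul_eq_mul]
  · intro B hB
    simp only [Finset.mem_filter, Finset.mem_univ, true_and] at hB ⊢
    obtain ⟨hcard, hsum⟩ := hB
    have hinj : Function.Injective (· + (-c)) := add_left_injective (-c)
    constructor
    · rw [Finset.card_image_of_injective _ hinj, hcard]
    · rw [Finset.sum_image (fun x _ y _ h => hinj h), Finset.sum_add_distrib, hsum,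
        Finset.sum_const, hcard, nsmul_eq_mul]
      ring
  · intro A _
    ext x
    simp only [Finset.mem_image]
    constructor
    · rintro ⟨y, ⟨z, hz, rfl⟩, rfl⟩
      simpa using hz
    · intro hx
      exact ⟨x + c, ⟨x, hx, rfl⟩, by ring⟩
  · intro B _
    ext x
    simp only [Finset.mem_image]
    constructor
    · rintro ⟨y, ⟨z, hz, rfl⟩, rfl⟩
      simpa using hz
    · intro hx
      exact ⟨x + (-c), ⟨x, hx, rfl⟩, by ring⟩

/-- For a prime `p`, `1 ≤ k ≤ p - 1`, and any `α ∈ F_p`, we have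
`N_k(α) = C(p, k) / p`, stated in the multiplied-out form
`p · N_k(α) = C(p, k)`. -/
theorem p_mul_Nsub_eq_choose
    (p : ℕ) (hp : p.Prime) (k : ℕ) (hk1 : 1 ≤ k) (hk2 : k ≤ p - 1)
    (α : ZMod p) :
    p * Nsub p k α = Nat.choose p k := by
  classical
  haveI : Fact p.Prime := ⟨hp⟩
  haveI : NeZero p := ⟨hp.pos.ne'⟩
  have hkne : (k : ZMod p) ≠ 0 := by
    rw [Ne, ZMod.natCast_eq_zero_iff]
    intro hdvd
    have := Nat.le_of_dvd (by omega) hdvd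
    omega
  -- all values of Nsub are equal
  have hconst : ∀ β : ZMod p, Nsub p k β = Nsub p k α := by
    intro β
    have := Nsub_shift p k β (((k : ZMod p))⁻¹ * (α - β))
    rw [this]
    congr 1
    field_simp
    ring
  have hsum : ∑ β : ZMod p, Nsub p k β = Nat.choose p k := by
    simp only [Nsub_eq_filter, ← Finset.filter_filter]
    rw [← Finset.card_eq_sum_card_fiberwise
      (f := fun A : Finset (ZMod p) => ∑ a ∈ A, a)
      (t := Finset.univ) (fun x _ => Finset.mem_univ _)]
    rw [← Finset.powerset_univ, ← Finset.powersetCard_eq_filter,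
      Finset.card_powersetCard, Finset.card_univ, ZMod.card]
  calc p * Nsub p k α = ∑ β : ZMod p, Nsub p k α := by
        rw [Finset.sum_const, Finset.card_univ, ZMod.card, smul_eq_mul]
    _ = ∑ β : ZMod p, Nsub p k β := by simp [hconst]
    _ = Nat.choose p k := hsum
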